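/- Let f(x) be a real polynomial of degree n. There exists a unique pair of polynomials (a(x), b(x)) such that f(x) = a(x) + x·b(x), x^n·a(1/x) = a(x), and x^{n−1}·b(1/x) = b(x). Moreover, a(x) = (f(x) − x^{n+1} f(1/x))/(1−x) and b(x) = (x^n f(1/x) − f(x))/(1−x). -/
import Mathlib


open Polynomial

lemma aux_reflect_reflect (N : ℕ) (p : ℝ[X]) : reflect N (reflect N p) = p := by
  ext i
  simp [coeff_reflect, revAt_invol]

lemma aux_reflect_natDegree_le {p : ℝ[X]} {N : ℕ} (h : p.natDegree ≤ N) :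
    (reflect N p).natDegree ≤ N := by
  rw [natDegree_le_iff_coeff_eq_zero]
  intro i hi
  rw [coeff_reflect, revAt_eq_self_of_lt hi]
  exact coeff_eq_zero_of_natDegree_lt (lt_of_le_of_lt h hi)

lemma aux_reflect_zero' (p : ℝ[X]) : reflect 0 p = p := by
  ext i
  rw [coeff_reflect]
  rcases i with _ | j
  · simp
  · rw [revAt_eq_self_of_lt (Nat.succ_pos _)]

lemma aux_one_sub_X_ne : (1 - X : ℝ[X]) ≠ 0 := by
  intro h
  have := congrArg (fun p => coeff p 1) h
  simp [coeff_one] at this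

lemma aux_natDegree_one_sub_X : (1 - X : ℝ[X]).natDegree = 1 := by
  have h : (1 - X : ℝ[X]) = -(X - C 1) := by simp
  rw [h, natDegree_neg, natDegree_X_sub_C]

lemma aux_reflect_one_sub_X : reflect 1 (1 - X : ℝ[X]) = X - 1 := by
  rw [reflect_sub, reflect_one, reflect_one_X, pow_one]

lemma aux_reflect_X_mul (m : ℕ) (b : ℝ[X]) (h4 : b.natDegree ≤ m) (h5 : reflect m b = b) :
    reflect (m + 1) (X * b) = b := by
  have h := reflect_mul X b (F := 1) (G := m) natDegree_X_le h4
  rw [show (1 : ℕ) + m = m + 1 from by omega] at h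
  rw [h, reflect_one_X, one_mul, h5]

lemma aux_key (m : ℕ) (f : ℝ[X]) (a b : ℝ[X])
    (h1 : f = a + X * b) (h3 : reflect (m + 1) a = a) (h4 : b.natDegree ≤ m)
    (h5 : reflect m b = b) :
    (1 - X) * a = f - X * reflect (m + 1) f ∧ (1 - X) * b = reflect (m + 1) f - f := by
  have hrefl : reflect (m + 1) f = a + b := by
    rw [h1, reflect_add, h3, aux_reflect_X_mul m b h4 h5]
  constructor
  · rw [hrefl, h1]; ring
  · rw [hrefl, h1]; ring

lemma aux_exists (m : ℕ) (f : ℝ[X]) (hf : f.natDegree = m + 1) :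
    ∃ a b : ℝ[X], f = a + X * b ∧ a.natDegree ≤ m + 1 ∧ reflect (m + 1) a = a ∧
      b.natDegree ≤ m ∧ reflect m b = b := by
  have hfle : f.natDegree ≤ m + 1 := hf.le
  have heval : (reflect (m + 1) f).eval 1 = f.eval 1 := by
    haveI : Invertible (1 : ℝ) := invertibleOne
    have h := eval₂_reflect_mul_pow (RingHom.id ℝ) (1 : ℝ) (m + 1) f hfle
    simpa using h
  have hroot : IsRoot (reflect (m + 1) f - f) 1 := by
    simp [IsRoot, heval]
  obtain ⟨q, hq⟩ := dvd_iff_isRoot.mpr hroot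
  set b : ℝ[X] := -q with hbdef
  have hb : (1 - X) * b = reflect (m + 1) f - f := by rw [hq, C_1]; ring
  have hgdeg : (reflect (m + 1) f - f).natDegree ≤ m + 1 :=
    (natDegree_sub_le _ _).trans (max_le (aux_reflect_natDegree_le hfle) hfle)
  have hbdeg : b.natDegree ≤ m := by
    by_cases hb0 : b = 0
    · simp [hb0]
    · have hmul := natDegree_mul aux_one_sub_X_ne hb0
      rw [hb, aux_natDegree_one_sub_X] at hmul
      omega
  have hX1ne : (X - 1 : ℝ[X]) ≠ 0 := by
    have h : (X - 1 : ℝ[X]) = -(1 - X) := by ring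
    rw [h]
    exact neg_ne_zero.mpr aux_one_sub_X_ne
  have hbsym : reflect m b = b := by
    have hL : reflect (m + 1) ((1 - X) * b) = (X - 1) * reflect m b := by
      have h := reflect_mul (1 - X) b (F := 1) (G := m) (le_of_eq aux_natDegree_one_sub_X) hbdeg
      rw [show (1 : ℕ) + m = m + 1 from by omega] at h
      rw [h, aux_reflect_one_sub_X]
    have h2 := congrArg (reflect (m + 1)) hb
    rw [hL, reflect_sub, aux_reflect_reflect] at h2
    exact mul_left_cancel₀ hX1ne (by linear_combination h2 + hb)
  refine ⟨f - X * b, b, by ring, ?_, ?_, hbdeg, hbsym⟩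
  · exact (natDegree_sub_le _ _).trans (max_le hfle
      (natDegree_mul_le.trans (by rw [natDegree_X]; omega)))
  · rw [reflect_sub, aux_reflect_X_mul m b hbdeg hbsym]
    linear_combination -hb


/-- **Symmetric decomposition.** Let `f` be a real polynomial of degree `n`. There is a
unique pair `(a, b)` with `f = a + x·b`, where `a` is symmetric with respect to degree `n`
(`xⁿ·a(1/x) = a(x)`, expressed via `reflect n a = a` together with `a.natDegree ≤ n`) and
`b` is symmetric with respect to degree `n-1`. Moreover,
`a(x) = (f(x) − x^{n+1} f(1/x))/(1−x)` and `b(x) = (xⁿ f(1/x) − f(x))/(1−x)`,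
expressed here in the denominator-cleared form `(1−x)·a = f − x·(xⁿ f(1/x))` and
`(1−x)·b = xⁿ f(1/x) − f`. -/
theorem stmt3 (n : ℕ) (f : ℝ[X]) (hf : f.natDegree = n) :
    (∃! ab : ℝ[X] × ℝ[X],
        f = ab.1 + X * ab.2 ∧
        ab.1.natDegree ≤ n ∧ reflect n ab.1 = ab.1 ∧
        ab.2.natDegree ≤ n - 1 ∧ reflect (n - 1) ab.2 = ab.2) ∧
    (∀ a b : ℝ[X],
        (f = a + X * b ∧ a.natDegree ≤ n ∧ reflect n a = a ∧
          b.natDegree ≤ n - 1 ∧ reflect (n - 1) b = b) →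
        (1 - X) * a = f - X * reflect n f ∧ (1 - X) * b = reflect n f - f) := by
  rcases n with _ | m
  · -- n = 0 : f is a constant
    have key0 : ∀ a b : ℝ[X], (f = a + X * b ∧ a.natDegree ≤ 0 ∧ reflect 0 a = a ∧
        b.natDegree ≤ 0 - 1 ∧ reflect (0 - 1) b = b) → b = 0 ∧ a = f := by
      rintro a b ⟨h1, h2, -, h4, -⟩
      have ha1 : a.coeff 1 = 0 := coeff_eq_zero_of_natDegree_lt (by omega)
      have hf1 : f.coeff 1 = 0 := coeff_eq_zero_of_natDegree_lt (by omega)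
      have hb00 : b.coeff 0 = 0 := by
        have hc := congrArg (fun p => coeff p 1) h1
        simpa [coeff_X_mul, ha1, hf1] using hc.symm
      have hb0 : b = 0 := by
        rw [eq_C_of_natDegree_le_zero (by omega : b.natDegree ≤ 0), hb00, map_zero]
      refine ⟨hb0, ?_⟩
      rw [h1, hb0]; ring
    constructor
    · refine ⟨(f, 0), ⟨by ring, hf.le, aux_reflect_zero' f, by simp, reflect_zero⟩, ?_⟩
      intro ab hab
      obtain ⟨hb0, ha⟩ := key0 ab.1 ab.2 hab
      exact Prod.ext ha hb0
    · intro a b h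
      obtain ⟨hb0, ha⟩ := key0 a b h
      rw [ha, hb0, aux_reflect_zero']
      constructor <;> ring
  · -- n = m + 1
    simp only [Nat.add_sub_cancel] at *
    obtain ⟨a0, b0, H1, H2, H3, H4, H5⟩ := aux_exists m f hf
    refine ⟨⟨(a0, b0), ⟨H1, H2, H3, H4, H5⟩, ?_⟩, ?_⟩
    · rintro ab ⟨h1, h2, h3, h4, h5⟩
      have F := aux_key m f ab.1 ab.2 h1 h3 h4 h5
      have F0 := aux_key m f a0 b0 H1 H3 H4 H5
      exact Prod.ext (mul_left_cancel₀ aux_one_sub_X_ne (F.1.trans F0.1.symm))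
        (mul_left_cancel₀ aux_one_sub_X_ne (F.2.trans F0.2.symm))
    · rintro a b ⟨h1, h2, h3, h4, h5⟩
      exact aux_key m f a b h1 h3 h4 h5
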